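/- Let t = p/q ∈ (0,1) with p, q coprime positive integers, p < q. If C_t has no exact overlaps, then the Lebesgue measure of C_t is at least 1/q. -/

import Mathlib

open Filter Topology MeasureTheory

/-- The digit set `Ω_t = {0, 3t, 3, 3t+3}`. -/
def Omega (t : ℝ) : Set ℝ := {0, 3*t, 3, 3*t+3}

/-- The projection `C_t` of the four corner Cantor set:
the set of sums `∑_{i≥1} d_i 4^{-i}` with all digits `d_i ∈ Ω_t`. -/
noncomputable def cornerC (t : ℝ) : Set ℝ :=
  {x | ∃ d : ℕ → ℝ, (∀ i, d i ∈ Omega t) ∧ x = ∑' i : ℕ, d i / 4^(i+1)}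

/-- `C_t` has an exact overlap: two distinct finite digit sequences of the same
length `k ≥ 1` with equal weighted sums. -/
def HasExactOverlap (t : ℝ) : Prop :=
  ∃ k : ℕ, 0 < k ∧ ∃ c d : Fin k → ℝ,
    (∀ n, c n ∈ Omega t) ∧ (∀ n, d n ∈ Omega t) ∧ c ≠ d ∧
    ∑ n : Fin k, c n / 4^((n : ℕ)+1) = ∑ n : Fin k, d n / 4^((n : ℕ)+1)



noncomputable def coDig (t : ℝ) : Fin 4 → ℝ := ![0, 3*t, 3, 3*t+3]

noncomputable def coS (t : ℝ) {k : ℕ} (e : Fin k → Fin 4) : ℝ :=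
  ∑ n : Fin k, coDig t (e n) / 4^((n:ℕ)+1)

noncomputable def coE (t : ℝ) (k : ℕ) : Set ℝ :=
  ⋃ e : Fin k → Fin 4, Set.Icc (coS t e) (coS t e + 2/4^k)

lemma coDig_mem (t : ℝ) (j : Fin 4) : coDig t j ∈ Omega t := by
  fin_cases j <;> simp [coDig, Omega]

lemma coDig_surj {t d : ℝ} (hd : d ∈ Omega t) : ∃ j, coDig t j = d := by
  simp only [Omega, Set.mem_insert_iff, Set.mem_singleton_iff] at hd
  rcases hd with h|h|h|h
  exacts [⟨0, by simp [coDig, h]⟩, ⟨1, by simp [coDig, h]⟩,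
    ⟨2, by simp [coDig, h]⟩, ⟨3, by simp [coDig, h]⟩]

lemma coDig_nonneg {t : ℝ} (h0 : 0 ≤ t) (j : Fin 4) : 0 ≤ coDig t j := by
  fin_cases j <;> simp [coDig] <;> linarith

lemma coDig_le {t : ℝ} (h1 : t ≤ 1) (j : Fin 4) : coDig t j ≤ 6 := by
  fin_cases j <;> simp [coDig] <;> linarith

lemma coDig_inj {t : ℝ} (h0 : 0 < t) (h1 : t < 1) : Function.Injective (coDig t) := by
  intro a b hab
  fin_cases a <;> fin_cases b <;> simp_all [coDig] <;> linarith

lemma coE_measurable (t : ℝ) (k : ℕ) : MeasurableSet (coE t k) :=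
  MeasurableSet.iUnion fun e => measurableSet_Icc

lemma coSummable_six : Summable (fun i : ℕ => (6:ℝ)/4^(i+1)) := by
  have h : Summable (fun i : ℕ => (6/4 : ℝ) * (1/4)^i) :=
    (summable_geometric_of_lt_one (by norm_num) (by norm_num)).mul_left _
  refine h.congr fun i => ?_
  rw [pow_succ]
  field_simp
  rw [← mul_pow]; norm_num

lemma coTsum_six (k : ℕ) : ∑' i : ℕ, (6:ℝ)/4^(i+k+1) = 2/4^k := by
  have h1 : ∀ i : ℕ, (6:ℝ)/4^(i+k+1) = (6/4^(k+1)) * (1/4)^i := by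
    intro i
    rw [show i+k+1 = (k+1)+i by omega, pow_add]
    field_simp
    rw [← mul_pow]; norm_num
  rw [tsum_congr h1, tsum_mul_left, tsum_geometric_of_lt_one (by norm_num) (by norm_num)]
  rw [pow_succ]
  norm_num
  field_simp
  ring


lemma coSummable {t : ℝ} (h0 : 0 ≤ t) (h1 : t ≤ 1) {d : ℕ → ℝ}
    (hd : ∀ i, d i ∈ Omega t) : Summable (fun i : ℕ => d i / 4^(i+1)) := by
  refine Summable.of_nonneg_of_le (fun i => ?_) (fun i => ?_) coSummable_six
  · obtain ⟨j, hj⟩ := coDig_surj (hd i)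
    have := coDig_nonneg h0 j
    rw [hj] at this
    positivity
  · obtain ⟨j, hj⟩ := coDig_surj (hd i)
    have := coDig_le h1 j
    rw [hj] at this
    gcongr

set_option maxHeartbeats 1000000 in
lemma cornerC_subset_coE {t : ℝ} (h0 : 0 ≤ t) (h1 : t ≤ 1) (k : ℕ) :
    cornerC t ⊆ coE t k := by
  rintro x ⟨d, hd, rfl⟩
  have hsum := coSummable h0 h1 hd
  have hsplit := Summable.sum_add_tsum_nat_add (f := fun i : ℕ => d i / 4^(i+1)) k hsum
  have hex : ∀ n : Fin k, ∃ j, coDig t j = d n := fun n => coDig_surj (hd n)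
  choose e he using hex
  have hS : coS t e = ∑ i ∈ Finset.range k, d i / 4^(i+1) := by
    rw [coS, ← Fin.sum_univ_eq_sum_range (fun i => d i / 4^(i+1)) k]
    exact Finset.sum_congr rfl fun n _ => by rw [he n]
  have htail0 : 0 ≤ ∑' i : ℕ, d (i+k) / 4^((i+k)+1) := by
    refine tsum_nonneg fun i => ?_
    obtain ⟨j, hj⟩ := coDig_surj (hd (i+k))
    have := coDig_nonneg h0 j
    rw [hj] at this
    positivity
  have htail2 : ∑' i : ℕ, d (i+k) / 4^((i+k)+1) ≤ 2/4^k := by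
    rw [← coTsum_six k]
    refine Summable.tsum_le_tsum (fun i => ?_) ((summable_nat_add_iff k).mpr hsum) ?_
    · obtain ⟨j, hj⟩ := coDig_surj (hd (i+k))
      have := coDig_le h1 j
      rw [hj] at this
      gcongr
    · exact (summable_nat_add_iff k).mpr coSummable_six
  simp only [coE, Set.mem_iUnion, Set.mem_Icc]
  refine ⟨e, ?_, ?_⟩
  · rw [hS, ← hsplit]; linarith
  · rw [hS, ← hsplit]; linarith

lemma coE_antitone {t : ℝ} (h0 : 0 ≤ t) (h1 : t ≤ 1) : Antitone (coE t) := by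
  refine antitone_nat_of_succ_le fun k => ?_
  intro x hx
  simp only [coE, Set.mem_iUnion, Set.mem_Icc] at hx ⊢
  obtain ⟨e, hx1, hx2⟩ := hx
  have hsplit : coS t e = coS t (e ∘ Fin.castSucc) + coDig t (e (Fin.last k)) / 4^(k+1) := by
    rw [coS, Fin.sum_univ_castSucc]
    simp [coS, Function.comp]
  have hd0 := coDig_nonneg h0 (e (Fin.last k))
  have hd6 := coDig_le h1 (e (Fin.last k))
  have h4 : (0:ℝ) < 4^(k+1) := by positivity
  refine ⟨e ∘ Fin.castSucc, ?_, ?_⟩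
  · rw [hsplit] at hx1
    have hq : (0:ℝ) ≤ coDig t (e (Fin.last k)) / 4^(k+1) := by positivity
    linarith
  · rw [hsplit] at hx2
    rw [pow_succ] at hx2
    have h4k : (0:ℝ) < 4^k := by positivity
    have hkey : coDig t (e (Fin.last k)) / (4^k*4) + 2/(4^k*4) ≤ 2/4^k := by
      rw [← add_div, div_le_div_iff₀ (by positivity) (by positivity)]
      nlinarith
    linarith


def coU (p q : ℕ) : Fin 4 → ℕ := ![0, p, q, p+q]

def coVal (p q : ℕ) {k : ℕ} (e : Fin k → Fin 4) : ℕ :=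
  ∑ n : Fin k, 3 * coU p q (e n) * 4^(k-1-(n:ℕ))

lemma coDig_rat {p q : ℕ} (hq : 0 < q) (j : Fin 4) :
    coDig ((p:ℝ)/q) j = 3 * (coU p q j : ℝ) / q := by
  have hq' : (q:ℝ) ≠ 0 := Nat.cast_ne_zero.mpr hq.ne'
  fin_cases j <;> simp [coDig, coU] <;> field_simp <;> ring

lemma coS_eq {p q : ℕ} (hq : 0 < q) {k : ℕ} (e : Fin k → Fin 4) :
    coS ((p:ℝ)/q) e = (coVal p q e : ℝ) / (q * 4^k) := by
  have hq' : (q:ℝ) ≠ 0 := Nat.cast_ne_zero.mpr hq.ne'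
  rw [coS, coVal]
  push_cast
  rw [Finset.sum_div]
  refine Finset.sum_congr rfl fun n _ => ?_
  rw [coDig_rat hq]
  have hn : (n:ℕ) + 1 ≤ k := n.isLt
  have h4 : (4:ℝ)^(k-1-(n:ℕ)) * 4^((n:ℕ)+1) = 4^k := by
    rw [← pow_add]; congr 1; omega
  rw [div_div, div_eq_div_iff (by positivity) (by positivity), ← h4]
  ring

lemma coVal_inj {p q : ℕ} (hp : 0 < p) (hpq : p < q)
    (hno : ¬ HasExactOverlap ((p:ℝ)/q)) {k : ℕ} :
    Function.Injective (coVal p q : (Fin k → Fin 4) → ℕ) := by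
  have hq : 0 < q := hp.trans hpq
  have ht0 : (0:ℝ) < (p:ℝ)/q := by positivity
  have ht1 : (p:ℝ)/q < 1 := by
    rw [div_lt_one (by exact_mod_cast hq)]
    exact_mod_cast hpq
  intro e₁ e₂ hval
  by_contra hne
  rcases Nat.eq_zero_or_pos k with hk | hk
  · subst hk; exact hne (Subsingleton.elim _ _)
  have hS : coS ((p:ℝ)/q) e₁ = coS ((p:ℝ)/q) e₂ := by
    rw [coS_eq hq, coS_eq hq, hval]
  refine hno ⟨k, hk, coDig ((p:ℝ)/q) ∘ e₁, coDig ((p:ℝ)/q) ∘ e₂,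
    fun n => coDig_mem _ _, fun n => coDig_mem _ _, ?_, hS⟩
  intro h
  exact hne (funext fun n => coDig_inj ht0 ht1 (congrFun h n))

lemma coVolume_lb {p q : ℕ} (hp : 0 < p) (hpq : p < q)
    (hno : ¬ HasExactOverlap ((p:ℝ)/q)) (k : ℕ) :
    1 / (q : ENNReal) ≤ volume (coE ((p:ℝ)/q) k) := by
  have hq : 0 < q := hp.trans hpq
  have hq' : (0:ℝ) < q := by exact_mod_cast hq
  set δ : ℝ := ((q:ℝ) * 4^k)⁻¹ with hδ
  have hδ0 : 0 < δ := by positivity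
  set I : (Fin k → Fin 4) → Set ℝ :=
    fun e => Set.Ico ((coVal p q e : ℝ) * δ) (((coVal p q e : ℝ) + 1) * δ) with hI
  have hδ2 : δ ≤ 2/4^k := by
    rw [hδ, inv_eq_one_div, div_le_div_iff₀ (by positivity) (by positivity)]
    have h4k : (0:ℝ) < 4^k := by positivity
    have : (1:ℝ) ≤ q := by exact_mod_cast hq
    nlinarith
  have hsub : (⋃ e, I e) ⊆ coE ((p:ℝ)/q) k := by
    refine Set.iUnion_subset fun e => ?_
    intro x hx
    obtain ⟨hx1, hx2⟩ := hx
    simp only [coE, Set.mem_iUnion, Set.mem_Icc]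
    refine ⟨e, ?_, ?_⟩
    · rw [coS_eq hq, div_eq_mul_inv, ← hδ]
      exact hx1
    · rw [coS_eq hq, div_eq_mul_inv, ← hδ]
      have : x < (coVal p q e : ℝ) * δ + δ := by nlinarith [hx2]
      linarith
  have key : ∀ m n : ℕ, m < n → Disjoint (Set.Ico ((m:ℝ)*δ) (((m:ℝ)+1)*δ))
      (Set.Ico ((n:ℝ)*δ) (((n:ℝ)+1)*δ)) := by
    intro m n hmn
    refine Set.disjoint_left.mpr fun x hx1 hx2 => ?_
    have h1 : x < ((m:ℝ)+1)*δ := hx1.2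
    have h2 : (n:ℝ)*δ ≤ x := hx2.1
    have h3 : ((m:ℝ)+1) ≤ (n:ℝ) := by exact_mod_cast hmn
    nlinarith
  have hdisj : Pairwise (Function.onFun Disjoint I) := by
    intro e₁ e₂ hne
    have hv : coVal p q e₁ ≠ coVal p q e₂ := fun h => hne (coVal_inj hp hpq hno h)
    rcases lt_or_gt_of_ne hv with h | h
    · exact key _ _ h
    · exact (key _ _ h).symm
  have hvolI : ∀ e, volume (I e) = ENNReal.ofReal δ := by
    intro e
    rw [hI]
    simp only [Real.volume_Ico]
    congr 1
    ring
  have hvolU : volume (⋃ e, I e) = ENNReal.ofReal (1/(q:ℝ)) := by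
    rw [measure_iUnion hdisj (fun e => measurableSet_Ico), tsum_fintype]
    simp only [hvolI, Finset.sum_const, Finset.card_univ, Fintype.card_fun,
      Fintype.card_fin, nsmul_eq_mul]
    rw [show ((4^k : ℕ) : ENNReal) = ENNReal.ofReal ((4:ℝ)^k) by
      rw [← ENNReal.ofReal_natCast]; norm_num]
    rw [← ENNReal.ofReal_mul (by positivity)]
    congr 1
    rw [hδ]
    field_simp
  have hfin : (1 : ENNReal)/(q:ENNReal) = ENNReal.ofReal (1/(q:ℝ)) := by
    rw [ENNReal.ofReal_div_of_pos hq', ENNReal.ofReal_one, ENNReal.ofReal_natCast]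
  rw [hfin, ← hvolU]
  exact measure_mono hsub

lemma coPigeon (U : Ultrafilter ℕ) (f : ℕ → Fin 4) :
    ∃ v, ∀ᶠ k in (U : Filter ℕ), f k = v := by
  by_contra h
  push_neg at h
  have hv : ∀ v : Fin 4, ∀ᶠ k in (U : Filter ℕ), f k ≠ v := fun v =>
    h v
  obtain ⟨k, hk⟩ := (Filter.eventually_all.mpr hv).exists
  exact hk (f k) rfl

set_option maxHeartbeats 1000000 in
lemma coIInter_subset {t : ℝ} (h0 : 0 ≤ t) (h1 : t ≤ 1) :
    (⋂ k, coE t k) ⊆ cornerC t := by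
  intro x hx
  have hex : ∀ k, ∃ e : Fin k → Fin 4, coS t e ≤ x ∧ x ≤ coS t e + 2/4^k := by
    intro k
    have hk := Set.mem_iInter.mp hx k
    simp only [coE, Set.mem_iUnion, Set.mem_Icc] at hk
    exact hk
  choose E hE1 hE2 using hex
  set F : ℕ → ℕ → Fin 4 := fun k i => if h : i < k then E k ⟨i, h⟩ else 0 with hF
  obtain ⟨U, hU⟩ : ∃ U : Ultrafilter ℕ, (U : Filter ℕ) ≤ atTop :=
    ⟨Ultrafilter.of atTop, Ultrafilter.of_le _⟩
  choose g hg using fun i => coPigeon U (fun k => F k i)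
  set d : ℕ → ℝ := fun i => coDig t (g i) with hd
  have hdmem : ∀ i, d i ∈ Omega t := fun i => coDig_mem t (g i)
  set P : ℕ → ℝ := fun k => ∑ i ∈ Finset.range k, d i / 4^(i+1) with hP
  have hkey : ∀ k, P k ≤ x ∧ x ≤ P k + 4/4^k := by
    intro k
    have hA : ∀ᶠ j in (U : Filter ℕ), k ≤ j ∧ ∀ i ∈ Finset.range k, F j i = g i := by
      refine ((Filter.eventually_ge_atTop k).filter_mono hU).and ?_
      exact (Filter.eventually_all_finset _).mpr fun i _ => hg i
    obtain ⟨j, hjk, hjF⟩ := hA.exists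
    have hSj : coS t (E j) = ∑ i ∈ Finset.range j, coDig t (F j i) / 4^(i+1) := by
      rw [← Fin.sum_univ_eq_sum_range (fun i => coDig t (F j i) / 4^(i+1)) j, coS]
      refine Finset.sum_congr rfl fun n _ => ?_
      have hFE : F j (↑n : ℕ) = E j n := by
        simp only [hF]
        rw [dif_pos n.isLt]
      rw [hFE]
    have hsplit : ∑ i ∈ Finset.range j, coDig t (F j i) / 4^(i+1)
        = P k + ∑ i ∈ Finset.Ico k j, coDig t (F j i) / 4^(i+1) := by
      rw [hP, Finset.range_eq_Ico, ← Finset.sum_Ico_consecutive _ (Nat.zero_le k) hjk,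
        ← Finset.range_eq_Ico]
      congr 1
      refine Finset.sum_congr rfl fun i hi => ?_
      rw [hjF i hi]
    have hR0 : 0 ≤ ∑ i ∈ Finset.Ico k j, coDig t (F j i) / 4^(i+1) :=
      Finset.sum_nonneg fun i _ => div_nonneg (coDig_nonneg h0 _) (by positivity)
    have hR2 : ∑ i ∈ Finset.Ico k j, coDig t (F j i) / 4^(i+1) ≤ 2/4^k := by
      calc ∑ i ∈ Finset.Ico k j, coDig t (F j i) / 4^(i+1)
          ≤ ∑ i ∈ Finset.Ico k j, (6:ℝ)/4^(i+1) :=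
            Finset.sum_le_sum fun i _ => by gcongr; exact coDig_le h1 _
        _ = ∑ i ∈ Finset.range (j-k), (6:ℝ)/4^((i+k)+1) := by
            rw [Finset.sum_Ico_eq_sum_range]
            exact Finset.sum_congr rfl fun i _ => by rw [add_comm k i]
        _ ≤ ∑' i : ℕ, (6:ℝ)/4^(i+k+1) :=
            Summable.sum_le_tsum _ (fun i _ => by positivity)
              ((summable_nat_add_iff k).mpr coSummable_six)
        _ = 2/4^k := coTsum_six k
    have h4jk : (2:ℝ)/4^j ≤ 2/4^k := by
      gcongr
      norm_num
    have h44 : (4:ℝ)/4^k = 2/4^k + 2/4^k := by ring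
    constructor
    · have := hE1 j; rw [hSj, hsplit] at this; linarith
    · have := hE2 j; rw [hSj, hsplit] at this; linarith
  have hsummable : Summable (fun i : ℕ => d i / 4^(i+1)) := coSummable h0 h1 hdmem
  have htend1 : Tendsto P atTop (𝓝 (∑' i, d i / 4^(i+1))) :=
    hsummable.hasSum.tendsto_sum_nat
  have htend0 : Tendsto (fun k : ℕ => (4:ℝ)/4^k) atTop (𝓝 0) := by
    have h := (tendsto_pow_atTop_nhds_zero_of_lt_one
      (by norm_num : (0:ℝ) ≤ 1/4) (by norm_num)).const_mul (4:ℝ)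
    simp only [mul_zero] at h
    refine h.congr fun k => ?_
    rw [div_pow, one_pow, mul_one_div]
  have htend2 : Tendsto P atTop (𝓝 x) := by
    refine tendsto_of_tendsto_of_tendsto_of_le_of_le
      (g := fun k : ℕ => x - 4/4^k) (h := fun _ : ℕ => x) ?_ tendsto_const_nhds
      (fun k => by have := (hkey k).2; linarith) (fun k => (hkey k).1)
    have := tendsto_const_nhds (x := x) (f := atTop (α := ℕ)) |>.sub htend0
    simpa using this
  exact ⟨d, hdmem, (tendsto_nhds_unique htend1 htend2).symm⟩


theorem measure_ge_of_no_overlap (p q : ℕ) (hp : 0 < p) (hpq : p < q)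
    (hco : Nat.Coprime p q) (hno : ¬ HasExactOverlap ((p : ℝ) / q)) :
    1 / (q : ENNReal) ≤ volume (cornerC ((p : ℝ) / q)) := by
  have hq : 0 < q := hp.trans hpq
  have ht0 : (0:ℝ) ≤ (p:ℝ)/q := by positivity
  have ht1 : (p:ℝ)/q ≤ 1 := by
    rw [div_le_one (by exact_mod_cast hq)]
    exact_mod_cast hpq.le
  have heq : cornerC ((p:ℝ)/q) = ⋂ k, coE ((p:ℝ)/q) k :=
    Set.Subset.antisymm (Set.subset_iInter fun k => cornerC_subset_coE ht0 ht1 k)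
      (coIInter_subset ht0 ht1)
  rw [heq]
  have hmeas : ∀ k, NullMeasurableSet (coE ((p:ℝ)/q) k) volume :=
    fun k => (coE_measurable _ k).nullMeasurableSet
  have hsub0 : coE ((p:ℝ)/q) 0 ⊆ Set.Icc (0:ℝ) 2 := by
    intro x hx
    simp only [coE, Set.mem_iUnion, Set.mem_Icc] at hx
    obtain ⟨e, hx1, hx2⟩ := hx
    have hz : coS ((p:ℝ)/q) e = 0 := by simp [coS]
    rw [hz] at hx1 hx2
    norm_num at hx2
    exact ⟨hx1, hx2⟩
  have hfin : volume (coE ((p:ℝ)/q) 0) ≠ ⊤ :=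
    ne_top_of_le_ne_top (measure_Icc_lt_top).ne (measure_mono hsub0)
  have htend := tendsto_measure_iInter_atTop (μ := volume) hmeas
    (coE_antitone ht0 ht1) ⟨0, hfin⟩
  exact ge_of_tendsto' htend fun k => coVolume_lb hp hpq hno k
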